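/- Let G be a weighted graph with Laplacian B, and let B̂ = B + B_e where B_e is the Laplacian of a single edge e=(u,v) with weight w > 0 (i.e., B_e has entries w at (u,u),(v,v) and -w at (u,v),(v,u), zeros elsewhere). For a positive diagonal matrix M, the ordered eigenvalues μ_i of M B and μ̂_i of M B̂ satisfy μ_i ≤ μ̂_i ≤ μ_i + (m_u + m_v) w for all i. -/

import Mathlib

open Matrix Polynomial

section AuxWeyl

variable {n : ℕ}

private lemma aux_charpoly_diagonal (d : Fin n → ℝ) :
    (Matrix.diagonal d).charpoly = ∏ i, (X - C (d i)) := by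
  have h : charmatrix (Matrix.diagonal d) = Matrix.diagonal (fun i => (X : ℝ[X]) - C (d i)) := by
    ext i j
    by_cases hij : i = j <;>
      simp [charmatrix, hij, Matrix.diagonal_apply, Matrix.one_apply]
  rw [Matrix.charpoly, h, Matrix.det_diagonal]

private lemma aux_charpoly_conj (P A : Matrix (Fin n) (Fin n) ℝ) (hP : IsUnit P.det) :
    (P * A * P⁻¹).charpoly = A.charpoly := by
  have h1 : P * P⁻¹ = 1 := Matrix.mul_nonsing_inv P hP
  have h2 : (P.map (C : ℝ →+* ℝ[X])) * (P⁻¹.map C) = 1 := by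
    rw [← Matrix.map_mul, h1, Matrix.map_one C (map_zero _) (map_one _)]
  have hcomm : ∀ Q : Matrix (Fin n) (Fin n) ℝ[X],
      Q * Matrix.scalar (Fin n) (X : ℝ[X]) = Matrix.scalar (Fin n) (X : ℝ[X]) * Q :=
    fun Q => (Matrix.scalar_commute (X : ℝ[X]) (fun r => Commute.all _ _) Q).symm
  have h3 : charmatrix (P * A * P⁻¹)
      = (P.map (C : ℝ →+* ℝ[X])) * charmatrix A * (P⁻¹.map C) := by
    unfold charmatrix
    rw [_root_.map_mul, _root_.map_mul]
    simp only [RingHom.mapMatrix_apply]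
    rw [mul_sub, sub_mul]
    congr 1
    rw [hcomm (P.map C), mul_assoc, h2, mul_one]
  rw [Matrix.charpoly, Matrix.charpoly, h3, Matrix.det_mul, Matrix.det_mul]
  have h4 : (P.map (C : ℝ →+* ℝ[X])).det * (P⁻¹.map C).det = 1 := by
    rw [← Matrix.det_mul, h2, Matrix.det_one]
  calc (P.map (C : ℝ →+* ℝ[X])).det * (charmatrix A).det * (P⁻¹.map C).det
      = (charmatrix A).det * ((P.map (C : ℝ →+* ℝ[X])).det * (P⁻¹.map C).det) := by ring
    _ = (charmatrix A).det := by rw [h4, mul_one]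

private lemma aux_multiset_of_prod_eq (f g : Fin n → ℝ)
    (h : (∏ i, (X - C (f i))) = ∏ i, (X - C (g i))) :
    Multiset.map f Finset.univ.val = Multiset.map g Finset.univ.val := by
  have key : ∀ p : Fin n → ℝ, (∏ i, (X - C (p i))).roots = Multiset.map p Finset.univ.val := by
    intro p
    rw [Finset.prod_eq_multiset_prod,
      show (Multiset.map (fun i => X - C (p i)) Finset.univ.val)
        = Multiset.map (fun a => X - C a) (Multiset.map p Finset.univ.val) from
        (Multiset.map_map (fun a => X - C a) p Finset.univ.val).symm,
      Polynomial.roots_multiset_prod_X_sub_C]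
  rw [← key f, ← key g, h]

private lemma aux_hermitian_charpoly {A : Matrix (Fin n) (Fin n) ℝ} (hA : A.IsHermitian) :
    A.charpoly = ∏ i, (X - C (hA.eigenvalues i)) := by
  set U : Matrix (Fin n) (Fin n) ℝ := (hA.eigenvectorUnitary : Matrix (Fin n) (Fin n) ℝ) with hU
  have hUr : U * star U = 1 := Matrix.mem_unitaryGroup_iff.mp hA.eigenvectorUnitary.2
  have hinv : U⁻¹ = star U := Matrix.inv_eq_right_inv hUr
  have hdet : IsUnit U.det := Matrix.isUnit_det_of_right_inverse hUr
  have hspec : A = U * Matrix.diagonal hA.eigenvalues * U⁻¹ := by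
    rw [hinv]
    have := hA.spectral_theorem
    convert this using 2
    rw [Unitary.conjStarAlgAut_apply]
    rfl
  rw [show A.charpoly = (U * Matrix.diagonal hA.eigenvalues * U⁻¹).charpoly from by rw [← hspec],
    aux_charpoly_conj _ _ hdet, aux_charpoly_diagonal]

private lemma aux_charpoly_add_smul_one {A : Matrix (Fin n) (Fin n) ℝ} (hA : A.IsHermitian)
    (c : ℝ) :
    (A + c • (1 : Matrix (Fin n) (Fin n) ℝ)).charpoly = ∏ i, (X - C (hA.eigenvalues i + c)) := by
  set U : Matrix (Fin n) (Fin n) ℝ := (hA.eigenvectorUnitary : Matrix (Fin n) (Fin n) ℝ) with hUdef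
  have hUr : U * star U = 1 := Matrix.mem_unitaryGroup_iff.mp hA.eigenvectorUnitary.2
  have hinv : U⁻¹ = star U := Matrix.inv_eq_right_inv hUr
  have hdet : IsUnit U.det := Matrix.isUnit_det_of_right_inverse hUr
  have hspec : A = U * Matrix.diagonal hA.eigenvalues * U⁻¹ := by
    rw [hinv]
    have := hA.spectral_theorem
    convert this using 2
    rw [Unitary.conjStarAlgAut_apply]
    rfl
  have hshift : A + c • (1 : Matrix (Fin n) (Fin n) ℝ)
      = U * Matrix.diagonal (fun i => hA.eigenvalues i + c) * U⁻¹ := by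
    have hd : Matrix.diagonal (fun i => hA.eigenvalues i + c)
        = Matrix.diagonal hA.eigenvalues + c • (1 : Matrix (Fin n) (Fin n) ℝ) := by
      ext i j
      by_cases hij : i = j <;> simp [Matrix.diagonal_apply, Matrix.one_apply, hij]
    rw [hd, Matrix.mul_add, Matrix.add_mul, ← hspec]
    congr 1
    rw [Matrix.mul_smul, Matrix.smul_mul, Matrix.mul_one, Matrix.mul_nonsing_inv _ hdet]
  rw [hshift, aux_charpoly_conj _ _ hdet, aux_charpoly_diagonal]

private lemma aux_dot_sum (x : Fin n → ℝ) (f : Fin n → Fin n → ℝ) :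
    x ⬝ᵥ (∑ j, f j) = ∑ j, x ⬝ᵥ f j := by
  simp only [dotProduct, Finset.sum_apply, Finset.mul_sum]
  exact Finset.sum_comm

private lemma aux_mulVec_sum (A : Matrix (Fin n) (Fin n) ℝ) (f : Fin n → Fin n → ℝ) :
    A *ᵥ (∑ j, f j) = ∑ j, A *ᵥ f j := by
  have h1 : A *ᵥ (∑ j, f j) = A.mulVecLin (∑ j, f j) := rfl
  rw [h1, map_sum]
  rfl

private lemma aux_parseval {A : Matrix (Fin n) (Fin n) ℝ} (hA : A.IsHermitian)
    (x : EuclideanSpace ℝ (Fin n)) :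
    ∑ j, (hA.eigenvectorBasis.repr x j)^2 = x ⬝ᵥ x := by
  have h1 : (inner ℝ x x : ℝ) = x ⬝ᵥ x := by rw [PiLp.inner_apply]; simp [dotProduct, sq]
  have h2 : (inner ℝ (hA.eigenvectorBasis.repr x) (hA.eigenvectorBasis.repr x) : ℝ) = inner ℝ x x :=
    hA.eigenvectorBasis.repr.inner_map_map x x
  rw [← h1, ← h2, PiLp.inner_apply]
  simp [sq]

private lemma aux_quad {A : Matrix (Fin n) (Fin n) ℝ} (hA : A.IsHermitian)
    (x : EuclideanSpace ℝ (Fin n)) :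
    x ⬝ᵥ (A *ᵥ x) = ∑ j, hA.eigenvalues j * (hA.eigenvectorBasis.repr x j)^2 := by
  set b := hA.eigenvectorBasis with hb
  set y : Fin n → ℝ := fun j => b.repr x j with hy
  have hx : ∑ j, y j • b j = x := b.sum_repr x
  have hxf : (∑ j, (fun j => y j • (b j : Fin n → ℝ)) j) = (x : Fin n → ℝ) := by
    rw [← hx]
    simp [WithLp.ofLp_sum]
  have hmul : A *ᵥ x = ∑ j, ((y j * hA.eigenvalues j) • (b j : Fin n → ℝ)) := by
    conv_lhs => rw [← hxf]
    rw [aux_mulVec_sum]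
    refine Finset.sum_congr rfl fun j _ => ?_
    rw [Matrix.mulVec_smul]
    rw [show A *ᵥ (b j : Fin n → ℝ) = hA.eigenvalues j • (b j : Fin n → ℝ) from
      hA.mulVec_eigenvectorBasis j]
    funext k
    simp [mul_smul, mul_comm]
    ring
  rw [hmul, aux_dot_sum]
  refine Finset.sum_congr rfl fun j _ => ?_
  rw [dotProduct_smul]
  have hxy : x ⬝ᵥ (b j : Fin n → ℝ) = y j := by
    have h3 : y j = (inner ℝ (b j) x : ℝ) := b.repr_apply_apply x j
    rw [h3, PiLp.inner_apply]
    simp [dotProduct, mul_comm]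
  rw [hxy]
  simp [sq]
  ring

private lemma aux_repr_vanish {A : Matrix (Fin n) (Fin n) ℝ} (hA : A.IsHermitian)
    (T : Finset (Fin n)) {x : EuclideanSpace ℝ (Fin n)}
    (hx : x ∈ Submodule.span ℝ (Set.range fun j : T => (hA.eigenvectorBasis j.1)))
    {k : Fin n} (hk : k ∉ T) : hA.eigenvectorBasis.repr x k = 0 := by
  set b := hA.eigenvectorBasis
  let L : EuclideanSpace ℝ (Fin n) →ₗ[ℝ] ℝ :=
    (PiLp.projₗ 2 (fun _ : Fin n => ℝ) k).comp (b.repr.toLinearEquiv.toLinearMap)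
  have hgen : Set.range (fun j : T => (b j.1))
      ⊆ (LinearMap.ker L : Set (EuclideanSpace ℝ (Fin n))) := by
    rintro _ ⟨j, rfl⟩
    have : b.repr (b j.1) = EuclideanSpace.single j.1 1 := b.repr_self j.1
    simp only [SetLike.mem_coe, LinearMap.mem_ker, L, LinearMap.comp_apply, LinearMap.proj_apply,
      LinearEquiv.coe_coe, LinearIsometryEquiv.coe_toLinearEquiv]
    have hne : j.1 ≠ k := fun h => hk (h ▸ j.2)
    show b.repr (b j.1) k = 0
    rw [this]
    simp [EuclideanSpace.single_apply, hne, Ne.symm hne]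
  have := Submodule.span_le.mpr hgen hx
  simpa [L] using this

private lemma aux_card_ge {e f : Fin n → ℝ} (hf : Monotone f)
    (hm : Multiset.map f Finset.univ.val = Multiset.map e Finset.univ.val) (i : Fin n) :
    n - i.1 ≤ (Finset.filter (fun j => f i ≤ e j) Finset.univ).card := by
  classical
  have h1 : (Finset.filter (fun j => f i ≤ e j) Finset.univ).card
      = Multiset.countP (fun a => f i ≤ a) (Multiset.map e Finset.univ.val) := by
    rw [Multiset.countP_map]
    simp [Finset.card_filter, Finset.filter_val, Multiset.countP_eq_card_filter, Finset.card_def]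
  have h2 : Multiset.countP (fun a => f i ≤ a) (Multiset.map f Finset.univ.val)
      = (Finset.filter (fun j => f i ≤ f j) Finset.univ).card := by
    rw [Multiset.countP_map]
    simp [Finset.card_filter, Finset.filter_val, Multiset.countP_eq_card_filter, Finset.card_def]
  rw [h1, ← hm, h2]
  calc n - i.1 = (Finset.Ici i).card := (Fin.card_Ici i).symm
    _ ≤ _ := by
        apply Finset.card_le_card
        intro j hj
        simp only [Finset.mem_Ici] at hj
        simp [hf hj]

private lemma aux_card_ge' {e g : Fin n → ℝ} (hg : Monotone g)
    (hm : Multiset.map g Finset.univ.val = Multiset.map e Finset.univ.val) (i : Fin n) :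
    i.1 + 1 ≤ (Finset.filter (fun j => e j ≤ g i) Finset.univ).card := by
  classical
  have h1 : (Finset.filter (fun j => e j ≤ g i) Finset.univ).card
      = Multiset.countP (fun a => a ≤ g i) (Multiset.map e Finset.univ.val) := by
    rw [Multiset.countP_map]
    simp [Finset.card_filter, Finset.filter_val, Multiset.countP_eq_card_filter, Finset.card_def]
  have h2 : Multiset.countP (fun a => a ≤ g i) (Multiset.map g Finset.univ.val)
      = (Finset.filter (fun j => g j ≤ g i) Finset.univ).card := by
    rw [Multiset.countP_map]
    simp [Finset.card_filter, Finset.filter_val, Multiset.countP_eq_card_filter, Finset.card_def]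
  rw [h1, ← hm, h2]
  calc i.1 + 1 = (Finset.Iic i).card := (Fin.card_Iic i).symm
    _ ≤ _ := by
        apply Finset.card_le_card
        intro j hj
        simp only [Finset.mem_Iic] at hj
        simp [hg hj]

private lemma aux_weyl {A A' : Matrix (Fin n) (Fin n) ℝ}
    (hA : A.IsHermitian) (hA' : A'.IsHermitian) (hle : (A' - A).PosSemidef)
    (f g : Fin n → ℝ) (hf : Monotone f) (hg : Monotone g)
    (hmf : Multiset.map f Finset.univ.val = Multiset.map hA.eigenvalues Finset.univ.val)
    (hmg : Multiset.map g Finset.univ.val = Multiset.map hA'.eigenvalues Finset.univ.val)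
    (i : Fin n) : f i ≤ g i := by
  classical
  set b := hA.eigenvectorBasis with hbdef
  set b' := hA'.eigenvectorBasis with hb'def
  set e := hA.eigenvalues
  set e' := hA'.eigenvalues
  set T : Finset (Fin n) := Finset.filter (fun j => f i ≤ e j) Finset.univ with hT
  set T' : Finset (Fin n) := Finset.filter (fun j => e' j ≤ g i) Finset.univ with hT'
  have hcardT : n - i.1 ≤ T.card := aux_card_ge hf hmf i
  have hcardT' : i.1 + 1 ≤ T'.card := aux_card_ge' hg hmg i
  set U : Submodule ℝ (EuclideanSpace ℝ (Fin n)) :=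
    Submodule.span ℝ (Set.range fun j : T => (b j.1)) with hU
  set W : Submodule ℝ (EuclideanSpace ℝ (Fin n)) :=
    Submodule.span ℝ (Set.range fun j : T' => (b' j.1)) with hW
  have hrankU : Module.finrank ℝ U = T.card := by
    have h := finrank_span_eq_card
      ((b.orthonormal.comp (Subtype.val : T → Fin n) Subtype.val_injective).linearIndependent)
    rw [Fintype.card_coe] at h
    exact h
  have hrankW : Module.finrank ℝ W = T'.card := by
    have h := finrank_span_eq_card
      ((b'.orthonormal.comp (Subtype.val : T' → Fin n) Subtype.val_injective).linearIndependent)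
    rw [Fintype.card_coe] at h
    exact h
  have hdim : Module.finrank ℝ (EuclideanSpace ℝ (Fin n)) = n := finrank_euclideanSpace_fin
  have hsup : Module.finrank ℝ (U ⊔ W : Submodule ℝ (EuclideanSpace ℝ (Fin n))) ≤ n := by
    have h := Submodule.finrank_le (U ⊔ W)
    rw [hdim] at h
    exact h
  have hinf : 0 < Module.finrank ℝ (U ⊓ W : Submodule ℝ (EuclideanSpace ℝ (Fin n))) := by
    have := Submodule.finrank_sup_add_finrank_inf_eq U W
    omega
  have hne : (U ⊓ W : Submodule ℝ (EuclideanSpace ℝ (Fin n))) ≠ ⊥ := by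
    intro h
    rw [h, finrank_bot] at hinf
    omega
  obtain ⟨x, hxmem, hx0⟩ := Submodule.exists_mem_ne_zero_of_ne_bot hne
  have hxU : x ∈ U := hxmem.1
  have hxW : x ∈ W := hxmem.2
  have hQpos : 0 < x ⬝ᵥ x := by
    have h0 : x ⬝ᵥ x = ∑ k, x k * x k := rfl
    have hnn : ∀ k, 0 ≤ x k * x k := fun k => mul_self_nonneg _
    have hex : ∃ k, x k ≠ 0 := by
      by_contra h
      push_neg at h
      exact hx0 (PiLp.ext (by simpa using h))
    obtain ⟨k, hk⟩ := hex
    rw [h0]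
    exact Finset.sum_pos' (fun k _ => hnn k) ⟨k, Finset.mem_univ k, mul_self_pos.mpr hk⟩
  have hlow : f i * (x ⬝ᵥ x) ≤ x ⬝ᵥ (A *ᵥ x) := by
    rw [aux_quad hA x, ← aux_parseval hA x, Finset.mul_sum]
    apply Finset.sum_le_sum
    intro k _
    by_cases hk : k ∈ T
    · have : f i ≤ e k := (Finset.mem_filter.mp hk).2
      nlinarith [sq_nonneg (b.repr x k)]
    · rw [aux_repr_vanish hA T hxU hk]
      simp
  have hhigh : x ⬝ᵥ (A' *ᵥ x) ≤ g i * (x ⬝ᵥ x) := by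
    rw [aux_quad hA' x, ← aux_parseval hA' x, Finset.mul_sum]
    apply Finset.sum_le_sum
    intro k _
    by_cases hk : k ∈ T'
    · have : e' k ≤ g i := (Finset.mem_filter.mp hk).2
      nlinarith [sq_nonneg (b'.repr x k)]
    · rw [aux_repr_vanish hA' T' hxW hk]
      simp
  have hloewner : x ⬝ᵥ (A *ᵥ x) ≤ x ⬝ᵥ (A' *ᵥ x) := by
    have h := hle.dotProduct_mulVec_nonneg (x : Fin n → ℝ)
    rw [star_trivial] at h
    rw [Matrix.sub_mulVec, dotProduct_sub] at h
    linarith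
  have hfg : f i * (x ⬝ᵥ x) ≤ g i * (x ⬝ᵥ x) := by linarith
  exact le_of_mul_le_mul_right hfg hQpos

private lemma aux_monotone_eq_of_multiset (f g : Fin n → ℝ) (hf : Monotone f) (hg : Monotone g)
    (h : Multiset.map f Finset.univ.val = Multiset.map g Finset.univ.val) : f = g := by
  rw [Fin.univ_val_map, Fin.univ_val_map] at h
  have hperm : (List.ofFn f).Perm (List.ofFn g) := Multiset.coe_eq_coe.mp h
  have := List.Perm.eq_of_sortedLE
    (List.sortedLE_ofFn_iff.mpr hf) (List.sortedLE_ofFn_iff.mpr hg) hperm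
  exact List.ofFn_injective this

end AuxWeyl

set_option maxHeartbeats 2000000 in
theorem stmt_7 (n : ℕ) (B : Matrix (Fin n) (Fin n) ℝ) (hB : B.PosSemidef)
    (u v : Fin n) (huv : u ≠ v) (w : ℝ) (hw : 0 < w)
    (Be : Matrix (Fin n) (Fin n) ℝ)
    (hBe : Be = Matrix.of (fun i j =>
      if i = u ∧ j = u then w else
      if i = v ∧ j = v then w else
      if (i = u ∧ j = v) ∨ (i = v ∧ j = u) then -w else 0))
    (m : Fin n → ℝ) (hm : ∀ i, 0 < m i)
    (mu muhat : Fin n → ℝ) (hmu : Monotone mu) (hmuhat : Monotone muhat)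
    (hchar : (Matrix.diagonal m * B).charpoly = ∏ i, (X - C (mu i)))
    (hcharhat : (Matrix.diagonal m * (B + Be)).charpoly = ∏ i, (X - C (muhat i))) :
    ∀ i, mu i ≤ muhat i ∧ muhat i ≤ mu i + (m u + m v) * w := by
  classical
  set s : Fin n → ℝ := fun i => Real.sqrt (m i) with hs
  have hspos : ∀ i, 0 < s i := fun i => Real.sqrt_pos.mpr (hm i)
  have hss : ∀ i, s i * s i = m i := fun i => Real.mul_self_sqrt (hm i).le
  set S : Matrix (Fin n) (Fin n) ℝ := Matrix.diagonal s with hSdef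
  have hSS : S * S = Matrix.diagonal m := by
    rw [hSdef, Matrix.diagonal_mul_diagonal]
    exact congrArg Matrix.diagonal (funext hss)
  have hSH : Sᴴ = S := by
    rw [hSdef, Matrix.diagonal_conjTranspose]
    congr 1
  have hSdet : IsUnit S.det := by
    rw [hSdef, Matrix.det_diagonal]
    exact isUnit_iff_ne_zero.mpr (ne_of_gt (Finset.prod_pos fun i _ => hspos i))
  set c : ℝ := (m u + m v) * w with hc
  -- the edge Laplacian data
  set d : Fin n → ℝ := fun k => if k = u then 1 else if k = v then -1 else 0 with hd
  have hBe2 : Be = w • Matrix.vecMulVec d d := by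
    rw [hBe]
    ext i j
    simp only [Matrix.of_apply, Matrix.smul_apply, Matrix.vecMulVec_apply, hd, smul_eq_mul]
    split_ifs <;> simp_all <;> ring
  have hd_dot : ∀ z : Fin n → ℝ, d ⬝ᵥ z = z u - z v := by
    intro z
    have h1 : ∀ k, d k * z k = (if k = u then z k else 0) + (if k = v then - z k else 0) := by
      intro k
      simp only [hd]
      split_ifs with h1 h2 <;> simp_all <;> ring
    calc d ⬝ᵥ z = ∑ k, ((if k = u then z k else 0) + (if k = v then - z k else 0)) :=
          Finset.sum_congr rfl fun k _ => h1 k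
      _ = z u - z v := by
          rw [Finset.sum_add_distrib, Finset.sum_ite_eq' Finset.univ u (fun k => z k),
            Finset.sum_ite_eq' Finset.univ v (fun k => - z k)]
          simp
          ring
  have hBe_mulVec : ∀ z : Fin n → ℝ, Be *ᵥ z = (w * (d ⬝ᵥ z)) • d := by
    intro z
    funext k
    rw [hBe2]
    simp only [Matrix.mulVec, Matrix.smul_apply, Matrix.vecMulVec_apply, Pi.smul_apply,
      dotProduct, smul_eq_mul, Finset.mul_sum, Finset.sum_mul]
    refine Finset.sum_congr rfl fun j _ => ?_
    ring
  have hBe_quad : ∀ z : Fin n → ℝ, z ⬝ᵥ (Be *ᵥ z) = w * (z u - z v)^2 := by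
    intro z
    rw [hBe_mulVec z, dotProduct_smul, smul_eq_mul, dotProduct_comm z d, hd_dot]
    ring
  have hBe_herm : Be.IsHermitian := by
    rw [hBe2]
    ext i j
    simp [Matrix.conjTranspose_apply, Matrix.vecMulVec_apply, mul_comm]
  have hBe_psd : Be.PosSemidef := by
    refine Matrix.PosSemidef.of_dotProduct_mulVec_nonneg hBe_herm fun z => ?_
    rw [star_trivial, hBe_quad]
    positivity
  -- conjugated matrices
  set A : Matrix (Fin n) (Fin n) ℝ := S * B * S with hAdef
  set A' : Matrix (Fin n) (Fin n) ℝ := S * (B + Be) * S with hA'def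
  set E : Matrix (Fin n) (Fin n) ℝ := S * Be * S with hEdef
  have hApsd : A.PosSemidef := by
    have := hB.mul_mul_conjTranspose_same S
    rwa [hSH] at this
  have hEpsd : E.PosSemidef := by
    have := hBe_psd.mul_mul_conjTranspose_same S
    rwa [hSH] at this
  have hA'E : A' = A + E := by
    rw [hA'def, hAdef, hEdef, Matrix.mul_add, Matrix.add_mul]
  have hA'psd : A'.PosSemidef := by
    have := (hB.add hBe_psd).mul_mul_conjTranspose_same S
    rwa [hSH] at this
  have hAh : A.IsHermitian := hApsd.1
  have hA'h : A'.IsHermitian := hA'psd.1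
  -- similarity with diagonal m * B
  have hsim : ∀ M : Matrix (Fin n) (Fin n) ℝ, S * (S * M * S) * S⁻¹ = Matrix.diagonal m * M := by
    intro M
    rw [← hSS]
    simp only [Matrix.mul_assoc]
    rw [Matrix.mul_nonsing_inv _ hSdet, Matrix.mul_one]
  have hcharA : A.charpoly = ∏ i, (X - C (mu i)) := by
    rw [← aux_charpoly_conj S A hSdet, hAdef, hsim B, hchar]
  have hcharA' : A'.charpoly = ∏ i, (X - C (muhat i)) := by
    rw [← aux_charpoly_conj S A' hSdet, hA'def, hsim (B + Be), hcharhat]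
  -- multiset identifications
  have hmsA : Multiset.map mu Finset.univ.val = Multiset.map hAh.eigenvalues Finset.univ.val :=
    aux_multiset_of_prod_eq mu hAh.eigenvalues (by rw [← hcharA, aux_hermitian_charpoly hAh])
  have hmsA' : Multiset.map muhat Finset.univ.val
      = Multiset.map hA'h.eigenvalues Finset.univ.val :=
    aux_multiset_of_prod_eq muhat hA'h.eigenvalues (by rw [← hcharA', aux_hermitian_charpoly hA'h])
  -- part 1 : mu i ≤ muhat i
  have part1 : ∀ i, mu i ≤ muhat i := by
    intro i
    have hle : (A' - A).PosSemidef := by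
      rw [hA'E]
      simpa using hEpsd
    exact aux_weyl hAh hA'h hle mu muhat hmu hmuhat hmsA hmsA' i
  -- shifted matrix
  set Ac : Matrix (Fin n) (Fin n) ℝ := A + c • (1 : Matrix (Fin n) (Fin n) ℝ) with hAcdef
  have hAch : Ac.IsHermitian := by
    rw [hAcdef]
    refine hAh.add ?_
    show (c • (1 : Matrix (Fin n) (Fin n) ℝ))ᴴ = _
    rw [Matrix.conjTranspose_smul, Matrix.conjTranspose_one, star_trivial]
  have hmsAc : Multiset.map (fun j => mu j + c) Finset.univ.val
      = Multiset.map hAch.eigenvalues Finset.univ.val := by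
    have h1 : Multiset.map (fun j => hAh.eigenvalues j + c) Finset.univ.val
        = Multiset.map hAch.eigenvalues Finset.univ.val := by
      refine aux_multiset_of_prod_eq _ _ ?_
      rw [← aux_charpoly_add_smul_one hAh c, ← hAcdef, aux_hermitian_charpoly hAch]
    have h2 : Multiset.map (fun j => mu j + c) Finset.univ.val
        = Multiset.map (fun j => hAh.eigenvalues j + c) Finset.univ.val := by
      have := congrArg (Multiset.map (fun a => a + c)) hmsA
      rwa [Multiset.map_map, Multiset.map_map] at this
    rw [h2, h1]
  -- part 2 : muhat i ≤ mu i + c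
  have part2 : ∀ i, muhat i ≤ mu i + c := by
    intro i
    have hle : (Ac - A').PosSemidef := by
      have hAcA' : Ac - A' = c • (1 : Matrix (Fin n) (Fin n) ℝ) - E := by
        rw [hAcdef, hA'E]
        abel
      rw [hAcA']
      refine Matrix.PosSemidef.of_dotProduct_mulVec_nonneg ?_ ?_
      · show (c • (1 : Matrix (Fin n) (Fin n) ℝ) - E)ᴴ = _
        rw [Matrix.conjTranspose_sub, Matrix.conjTranspose_smul, Matrix.conjTranspose_one,
          star_trivial, hEpsd.1.eq]
      · intro x
        rw [star_trivial, Matrix.sub_mulVec, dotProduct_sub]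
        have hq1 : x ⬝ᵥ ((c • (1 : Matrix (Fin n) (Fin n) ℝ)) *ᵥ x) = c * (x ⬝ᵥ x) := by
          rw [Matrix.smul_mulVec, Matrix.one_mulVec, dotProduct_smul, smul_eq_mul]
        have hzx : ∀ k, (S *ᵥ x) k = s k * x k := by
          intro k
          rw [hSdef, Matrix.mulVec_diagonal]
        have hq2 : x ⬝ᵥ (E *ᵥ x) = w * (s u * x u - s v * x v)^2 := by
          have hswap : ∀ y : Fin n → ℝ, x ⬝ᵥ (S *ᵥ y) = (S *ᵥ x) ⬝ᵥ y := by
            intro y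
            simp only [hSdef, dotProduct, Matrix.mulVec_diagonal]
            exact Finset.sum_congr rfl fun k _ => by ring
          rw [hEdef, show (S * Be * S) *ᵥ x = S *ᵥ (Be *ᵥ (S *ᵥ x)) from by
              rw [Matrix.mulVec_mulVec, Matrix.mulVec_mulVec],
            hswap, hBe_quad, hzx, hzx]
        rw [hq1, hq2]
        set P : ℝ := x ⬝ᵥ x with hP
        have hsub : x u * x u + x v * x v ≤ P := by
          have h := Finset.sum_le_sum_of_subset_of_nonneg
            (Finset.subset_univ ({u, v} : Finset (Fin n)))
            (fun k _ _ => mul_self_nonneg (x k))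
          rwa [Finset.sum_pair huv] at h
        have key : (s u * x u - s v * x v)^2
            ≤ (s u * s u + s v * s v) * (x u * x u + x v * x v) := by
          nlinarith [sq_nonneg (s u * x v + s v * x u)]
        have h6 : (s u * s u + s v * s v) * (x u * x u + x v * x v)
            ≤ (s u * s u + s v * s v) * P := by
          refine mul_le_mul_of_nonneg_left hsub ?_
          positivity
        have h8 : w * (s u * x u - s v * x v)^2 ≤ w * ((s u * s u + s v * s v) * P) :=
          mul_le_mul_of_nonneg_left (key.trans h6) hw.le
        have h7 : c * P = w * ((s u * s u + s v * s v) * P) := by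
          rw [hc, ← hss u, ← hss v]
          ring
        linarith
    exact aux_weyl hA'h hAch hle muhat (fun j => mu j + c) hmuhat
      (fun a b hab => by simpa using add_le_add_right (hmu hab) c) hmsA' hmsAc i
  exact fun i => ⟨part1 i, part2 i⟩
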